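/- Let 0 < σ ≤ 1/2, β ∈ ℝ, 0 < ε < 1, and let f_ε be the regularization of f(ρ) = β ρ^σ as above. Then there is a constant C₂ depending only on σ and β such that |√ρ f_ε'(ρ)| + |ρ^{3/2} f_ε''(ρ)| ≤ C₂ ε^{2σ-1} for all ρ ≥ 0. -/

import Mathlib

/-- Generalized binomial coefficient `binom(x, j) = x(x-1)⋯(x-j+1)/j!`. -/
noncomputable def gbinom (x : ℝ) (j : ℕ) : ℝ :=
  (∏ i ∈ Finset.range j, (x - i)) / (Nat.factorial j)

/-- The cubic polynomial `Q_ε(ρ) = β ε^{2σ-2} Σ_{j=0}^{3} binom(j-σ, j)(1-ρ/ε²)^j`. -/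
noncomputable def Qreg (σ β ε ρ : ℝ) : ℝ :=
  β * ε ^ (2 * σ - 2) *
    ∑ j ∈ Finset.range 4, gbinom ((j : ℝ) - σ) j * (1 - ρ / ε ^ 2) ^ j

/-- The local regularization `f_ε` of `f(ρ) = β ρ^σ`. -/
noncomputable def freg (σ β ε ρ : ℝ) : ℝ :=
  if ε ^ 2 ≤ ρ then β * ρ ^ σ else ρ * Qreg σ β ε ρ

noncomputable def G1 (σ β ε ρ : ℝ) : ℝ :=
  β * ε ^ (2 * σ - 2) *
    ((1 + (1-σ)*(1-ρ/ε^2) + ((2-σ)*(1-σ)/2)*(1-ρ/ε^2)^2 + ((3-σ)*(2-σ)*(1-σ)/6)*(1-ρ/ε^2)^3)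
      - (ρ/ε^2) * ((1-σ) + 2*((2-σ)*(1-σ)/2)*(1-ρ/ε^2) + 3*((3-σ)*(2-σ)*(1-σ)/6)*(1-ρ/ε^2)^2))

noncomputable def G2 (σ β ε ρ : ℝ) : ℝ :=
  β * ε ^ (2 * σ - 2) / ε^2 *
    (-2*((1-σ) + 2*((2-σ)*(1-σ)/2)*(1-ρ/ε^2) + 3*((3-σ)*(2-σ)*(1-σ)/6)*(1-ρ/ε^2)^2)
      + (ρ/ε^2) * (2*((2-σ)*(1-σ)/2) + 6*((3-σ)*(2-σ)*(1-σ)/6)*(1-ρ/ε^2)))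

lemma Qreg_eq (σ β ε ρ : ℝ) : Qreg σ β ε ρ =
    β * ε ^ (2 * σ - 2) *
      (1 + (1-σ)*(1-ρ/ε^2) + ((2-σ)*(1-σ)/2)*(1-ρ/ε^2)^2 + ((3-σ)*(2-σ)*(1-σ)/6)*(1-ρ/ε^2)^3) := by
  simp only [Qreg, gbinom, Finset.sum_range_succ, Finset.prod_range_succ, Finset.range_zero,
    Finset.sum_empty, Finset.prod_empty, Nat.factorial]
  push_cast
  ring

lemma hasDerivAt_g (σ β ε : ℝ) (ρ : ℝ) :
    HasDerivAt (fun x => x * Qreg σ β ε x) (G1 σ β ε ρ) ρ := by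
  have hu : HasDerivAt (fun x : ℝ => 1 - x / ε^2) (-(ε^2)⁻¹) ρ := by
    simpa using ((hasDerivAt_id ρ).div_const (ε^2)).const_sub 1
  have hP : HasDerivAt (fun x : ℝ =>
      1 + (1-σ)*(1-x/ε^2) + ((2-σ)*(1-σ)/2)*(1-x/ε^2)^2 + ((3-σ)*(2-σ)*(1-σ)/6)*(1-x/ε^2)^3)
      (((1-σ) + 2*((2-σ)*(1-σ)/2)*(1-ρ/ε^2) + 3*((3-σ)*(2-σ)*(1-σ)/6)*(1-ρ/ε^2)^2) * (-(ε^2)⁻¹)) ρ := by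
    have := ((((hu.const_mul (1-σ)).const_add 1).add ((hu.pow 2).const_mul ((2-σ)*(1-σ)/2))).add
      ((hu.pow 3).const_mul ((3-σ)*(2-σ)*(1-σ)/6)))
    exact this.congr_deriv (by ring)
  have := (hasDerivAt_id ρ).mul (hP.const_mul (β * ε ^ (2 * σ - 2)))
  have h2 : HasDerivAt (fun x => x * Qreg σ β ε x) _ ρ :=
    this.congr_of_eventuallyEq (by filter_upwards with x; rw [Qreg_eq]; rfl)
  convert h2 using 1
  simp only [G1, id_eq]
  field_simp
  ring

lemma hasDerivAt_G1 (σ β ε : ℝ) (ρ : ℝ) :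
    HasDerivAt (G1 σ β ε) (G2 σ β ε ρ) ρ := by
  have hu : HasDerivAt (fun x : ℝ => 1 - x / ε^2) (-(ε^2)⁻¹) ρ := by
    simpa using ((hasDerivAt_id ρ).div_const (ε^2)).const_sub 1
  have hP : HasDerivAt (fun x : ℝ =>
      1 + (1-σ)*(1-x/ε^2) + ((2-σ)*(1-σ)/2)*(1-x/ε^2)^2 + ((3-σ)*(2-σ)*(1-σ)/6)*(1-x/ε^2)^3)
      (((1-σ) + 2*((2-σ)*(1-σ)/2)*(1-ρ/ε^2) + 3*((3-σ)*(2-σ)*(1-σ)/6)*(1-ρ/ε^2)^2) * (-(ε^2)⁻¹)) ρ := by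
    have := ((((hu.const_mul (1-σ)).const_add 1).add ((hu.pow 2).const_mul ((2-σ)*(1-σ)/2))).add
      ((hu.pow 3).const_mul ((3-σ)*(2-σ)*(1-σ)/6)))
    exact this.congr_deriv (by ring)
  have hR : HasDerivAt (fun x : ℝ =>
      (1-σ) + 2*((2-σ)*(1-σ)/2)*(1-x/ε^2) + 3*((3-σ)*(2-σ)*(1-σ)/6)*(1-x/ε^2)^2)
      ((2*((2-σ)*(1-σ)/2) + 6*((3-σ)*(2-σ)*(1-σ)/6)*(1-ρ/ε^2)) * (-(ε^2)⁻¹)) ρ := by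
    have := (((hu.const_mul (2*((2-σ)*(1-σ)/2))).const_add (1-σ)).add
      ((hu.pow 2).const_mul (3*((3-σ)*(2-σ)*(1-σ)/6))))
    exact this.congr_deriv (by ring)
  have hxR := ((hasDerivAt_id ρ).div_const (ε^2)).mul hR
  have := (hP.sub hxR).const_mul (β * ε ^ (2 * σ - 2))
  refine this.congr_deriv ?_
  simp only [G2, id_eq]
  rcases eq_or_ne ε 0 with h0 | h0
  · subst h0; simp
  field_simp
  ring

lemma sq_rpow {ε : ℝ} (hε : 0 < ε) (t : ℝ) : ((ε^2 : ℝ)) ^ t = ε ^ (2*t) := by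
  have h2 : (ε^2 : ℝ) = ε ^ (2:ℝ) := by
    rw [← Real.rpow_natCast ε 2]; norm_num
  rw [h2, ← Real.rpow_mul hε.le]

lemma rpow_muladd {ε : ℝ} (hε : 0 < ε) (a : ℝ) : (ε^2:ℝ) * ε ^ a = ε ^ (a + 2) := by
  have h2 : (ε^2 : ℝ) = ε ^ (2:ℝ) := by
    rw [← Real.rpow_natCast ε 2]; norm_num
  rw [h2, ← Real.rpow_add hε]; ring_nf

lemma val_match {σ β ε : ℝ} (hε : 0 < ε) :
    (ε^2) * Qreg σ β ε (ε^2) = β * ((ε^2:ℝ)) ^ σ := by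
  have he : (ε^2:ℝ) ≠ 0 := pow_ne_zero 2 hε.ne'
  rw [Qreg_eq, div_self he]
  rw [sq_rpow hε σ]
  norm_num
  rw [← mul_assoc, mul_comm (ε^2) β, mul_assoc, rpow_muladd hε]
  ring_nf

lemma G1_match {σ β ε : ℝ} (hε : 0 < ε) :
    G1 σ β ε (ε^2) = β * σ * ((ε^2:ℝ)) ^ (σ-1) := by
  have he : (ε^2:ℝ) ≠ 0 := pow_ne_zero 2 hε.ne'
  simp only [G1]
  rw [div_self he, sq_rpow hε (σ-1)]
  ring_nf

lemma G2_match {σ β ε : ℝ} (hε : 0 < ε) :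
    G2 σ β ε (ε^2) = β * σ * (σ-1) * ((ε^2:ℝ)) ^ (σ-2) := by
  have he : (ε^2:ℝ) ≠ 0 := pow_ne_zero 2 hε.ne'
  have key : (ε ^ (2*σ-2) : ℝ) = ε^2 * ε ^ (2*(σ-2)) := by
    rw [rpow_muladd hε]; ring_nf
  simp only [G2]
  rw [div_self he, sq_rpow hε (σ-2), key]
  field_simp
  ring

lemma freg_eq_Iic {σ β ε : ℝ} (hε : 0 < ε) :
    Set.EqOn (freg σ β ε) (fun x => x * Qreg σ β ε x) (Set.Iic (ε^2)) := by
  intro x hx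
  rcases eq_or_lt_of_le (Set.mem_Iic.mp hx) with h | h
  · subst h
    simp only [freg, if_pos le_rfl]
    exact (val_match hε).symm
  · simp [freg, not_le.2 h]

lemma deriv_freg {σ β ε : ℝ} (hε : 0 < ε) :
    deriv (freg σ β ε) = fun ρ => if ε^2 ≤ ρ then β*σ*ρ^(σ-1) else G1 σ β ε ρ := by
  funext ρ
  rcases lt_trichotomy ρ (ε^2) with h | h | h
  · rw [if_neg (not_le.2 h)]
    have hev : freg σ β ε =ᶠ[nhds ρ] fun x => x * Qreg σ β ε x := by
      filter_upwards [Iio_mem_nhds h] with x hx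
      simp [freg, not_le.2 (Set.mem_Iio.mp hx)]
    rw [hev.deriv_eq]
    exact (hasDerivAt_g σ β ε ρ).deriv
  · subst h
    have he : (ε^2:ℝ) ≠ 0 := pow_ne_zero 2 hε.ne'
    have hL : HasDerivWithinAt (freg σ β ε) (β*σ*((ε^2:ℝ))^(σ-1)) (Set.Iic (ε^2)) (ε^2) := by
      have h1 := (hasDerivAt_g σ β ε (ε^2)).hasDerivWithinAt (s := Set.Iic (ε^2))
      rw [G1_match hε] at h1
      exact h1.congr (freg_eq_Iic hε) (freg_eq_Iic hε Set.self_mem_Iic)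
    have hR : HasDerivWithinAt (freg σ β ε) (β*σ*((ε^2:ℝ))^(σ-1)) (Set.Ici (ε^2)) (ε^2) := by
      have hd : HasDerivAt (fun x:ℝ => β * x ^ σ) (β * (σ * ((ε^2:ℝ))^(σ-1))) (ε^2) :=
        (Real.hasDerivAt_rpow_const (p := σ) (Or.inl he)).const_mul β
      have h2 := (hd.hasDerivWithinAt (s := Set.Ici (ε^2))).congr (f₁ := freg σ β ε)
        (fun y hy => by simp [freg, Set.mem_Ici.mp hy]) (by simp [freg])
      simpa [mul_assoc] using h2
    have hU := hL.union hR
    rw [Set.Iic_union_Ici, hasDerivWithinAt_univ] at hU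
    rw [if_pos le_rfl]
    exact hU.deriv
  · rw [if_pos h.le]
    have hρ : ρ ≠ 0 := ne_of_gt (lt_trans (pow_pos hε 2) h)
    have hev : freg σ β ε =ᶠ[nhds ρ] fun x => β * x ^ σ := by
      filter_upwards [Ioi_mem_nhds h] with x hx
      simp [freg, le_of_lt (Set.mem_Ioi.mp hx)]
    rw [hev.deriv_eq]
    have hd : HasDerivAt (fun x:ℝ => β * x ^ σ) (β * (σ * ρ^(σ-1))) ρ :=
      (Real.hasDerivAt_rpow_const (p := σ) (Or.inl hρ)).const_mul β
    rw [hd.deriv]; ring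

lemma deriv2_freg {σ β ε : ℝ} (hε : 0 < ε) :
    deriv (deriv (freg σ β ε)) =
      fun ρ => if ε^2 ≤ ρ then β*σ*(σ-1)*ρ^(σ-2) else G2 σ β ε ρ := by
  rw [deriv_freg hε]
  funext ρ
  have hF1 : Set.EqOn (fun ρ => if ε^2 ≤ ρ then β*σ*ρ^(σ-1) else G1 σ β ε ρ)
      (G1 σ β ε) (Set.Iic (ε^2)) := by
    intro x hx
    rcases eq_or_lt_of_le (Set.mem_Iic.mp hx) with h | h
    · subst h
      simp only [if_pos le_rfl]
      exact (G1_match hε).symm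
    · simp [not_le.2 h]
  rcases lt_trichotomy ρ (ε^2) with h | h | h
  · rw [if_neg (not_le.2 h)]
    have hev : (fun ρ => if ε^2 ≤ ρ then β*σ*ρ^(σ-1) else G1 σ β ε ρ)
        =ᶠ[nhds ρ] G1 σ β ε := by
      filter_upwards [Iio_mem_nhds h] with x hx
      simp [not_le.2 (Set.mem_Iio.mp hx)]
    rw [hev.deriv_eq]
    exact (hasDerivAt_G1 σ β ε ρ).deriv
  · subst h
    have he : (ε^2:ℝ) ≠ 0 := pow_ne_zero 2 hε.ne'
    have hL : HasDerivWithinAt (fun ρ => if ε^2 ≤ ρ then β*σ*ρ^(σ-1) else G1 σ β ε ρ)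
        (β*σ*(σ-1)*((ε^2:ℝ))^(σ-2)) (Set.Iic (ε^2)) (ε^2) := by
      have h1 := (hasDerivAt_G1 σ β ε (ε^2)).hasDerivWithinAt (s := Set.Iic (ε^2))
      rw [G2_match hε] at h1
      exact h1.congr hF1 (hF1 Set.self_mem_Iic)
    have hR : HasDerivWithinAt (fun ρ => if ε^2 ≤ ρ then β*σ*ρ^(σ-1) else G1 σ β ε ρ)
        (β*σ*(σ-1)*((ε^2:ℝ))^(σ-2)) (Set.Ici (ε^2)) (ε^2) := by
      have hd : HasDerivAt (fun x:ℝ => β*σ * x ^ (σ-1)) (β*σ * ((σ-1) * ((ε^2:ℝ))^(σ-1-1))) (ε^2) :=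
        (Real.hasDerivAt_rpow_const (p := σ-1) (Or.inl he)).const_mul (β*σ)
      have h2 := (hd.hasDerivWithinAt (s := Set.Ici (ε^2))).congr
        (f₁ := fun ρ => if ε^2 ≤ ρ then β*σ*ρ^(σ-1) else G1 σ β ε ρ)
        (fun y hy => by simp [Set.mem_Ici.mp hy]) (by simp)
      have : σ - 1 - 1 = σ - 2 := by ring
      rw [this] at h2
      simpa [mul_assoc] using h2
    have hU := hL.union hR
    rw [Set.Iic_union_Ici, hasDerivWithinAt_univ] at hU
    rw [if_pos le_rfl]
    exact hU.deriv
  · rw [if_pos h.le]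
    have hρ : ρ ≠ 0 := ne_of_gt (lt_trans (pow_pos hε 2) h)
    have hev : (fun ρ => if ε^2 ≤ ρ then β*σ*ρ^(σ-1) else G1 σ β ε ρ)
        =ᶠ[nhds ρ] fun x => β*σ * x ^ (σ-1) := by
      filter_upwards [Ioi_mem_nhds h] with x hx
      simp [le_of_lt (Set.mem_Ioi.mp hx)]
    rw [hev.deriv_eq]
    have hd : HasDerivAt (fun x:ℝ => β*σ * x ^ (σ-1)) (β*σ * ((σ-1) * ρ^(σ-1-1))) ρ :=
      (Real.hasDerivAt_rpow_const (p := σ-1) (Or.inl hρ)).const_mul (β*σ)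
    rw [hd.deriv]
    rw [show σ - 1 - 1 = σ - 2 by ring]
    ring

lemma S1_bound (σ u : ℝ) (hσ0 : 0 < σ) (hσ : σ ≤ 1/2) (hu0 : 0 ≤ u) (hu1 : u ≤ 1) :
    |(1 + (1-σ)*u + ((2-σ)*(1-σ)/2)*u^2 + ((3-σ)*(2-σ)*(1-σ)/6)*u^3)
      - (1-u) * ((1-σ) + 2*((2-σ)*(1-σ)/2)*u + 3*((3-σ)*(2-σ)*(1-σ)/6)*u^2)| ≤ 10 := by
  have h1 : (0:ℝ) ≤ 1 - σ := by linarith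
  have h2 : (1:ℝ) - σ ≤ 1 := by linarith
  have h3 : (0:ℝ) ≤ 2 - σ := by linarith
  have h4 : (2:ℝ) - σ ≤ 2 := by linarith
  have h5 : (0:ℝ) ≤ 3 - σ := by linarith
  have h6 : (3:ℝ) - σ ≤ 3 := by linarith
  rw [abs_le]
  constructor <;>
  nlinarith [mul_nonneg hu0 hu0, mul_nonneg (mul_nonneg hu0 hu0) hu0,
    pow_le_one₀ hu0 hu1 (n := 2), pow_le_one₀ hu0 hu1 (n := 3),
    mul_nonneg h1 hu0, mul_nonneg (mul_nonneg h3 h1) (mul_nonneg hu0 hu0),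
    mul_nonneg (mul_nonneg (mul_nonneg h5 h3) h1) (mul_nonneg (mul_nonneg hu0 hu0) hu0),
    mul_le_one₀ (by nlinarith : (2-σ)*(1-σ)/2 ≤ 1) (by positivity) (pow_le_one₀ hu0 hu1 (n:=2)),
    sq_nonneg u, sq_nonneg (1-u), mul_nonneg (sub_nonneg.2 hu1) hu0]

lemma S2_bound (σ u : ℝ) (hσ0 : 0 < σ) (hσ : σ ≤ 1/2) (hu0 : 0 ≤ u) (hu1 : u ≤ 1) :
    |(-2*((1-σ) + 2*((2-σ)*(1-σ)/2)*u + 3*((3-σ)*(2-σ)*(1-σ)/6)*u^2)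
      + (1-u) * (2*((2-σ)*(1-σ)/2) + 6*((3-σ)*(2-σ)*(1-σ)/6)*u))| ≤ 20 := by
  have h1 : (0:ℝ) ≤ 1 - σ := by linarith
  have h2 : (1:ℝ) - σ ≤ 1 := by linarith
  have h3 : (0:ℝ) ≤ 2 - σ := by linarith
  have h4 : (2:ℝ) - σ ≤ 2 := by linarith
  have h5 : (0:ℝ) ≤ 3 - σ := by linarith
  have h6 : (3:ℝ) - σ ≤ 3 := by linarith
  rw [abs_le]
  constructor <;>
  nlinarith [mul_nonneg hu0 hu0, pow_le_one₀ hu0 hu1 (n := 2),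
    mul_nonneg h1 hu0, mul_nonneg (mul_nonneg h3 h1) hu0,
    mul_nonneg (mul_nonneg (mul_nonneg h5 h3) h1) (mul_nonneg hu0 hu0),
    mul_nonneg (sub_nonneg.2 hu1) hu0, sq_nonneg u, sq_nonneg (1-u),
    mul_nonneg (mul_nonneg (mul_nonneg h5 h3) h1) (mul_nonneg (sub_nonneg.2 hu1) hu0),
    mul_nonneg (mul_nonneg h3 h1) (sub_nonneg.2 hu1)]


/-- For `0 < σ ≤ 1/2`: `|√ρ f_ε'(ρ)| + |ρ^{3/2} f_ε''(ρ)| ≤ C₂ ε^{2σ-1}` for all `ρ ≥ 0`. -/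
theorem stmt12 (σ β : ℝ) (hσ0 : 0 < σ) (hσ : σ ≤ 1 / 2) :
    ∃ C₂ : ℝ, 0 < C₂ ∧ ∀ ε : ℝ, 0 < ε → ε < 1 → ∀ ρ : ℝ, 0 ≤ ρ →
      |Real.sqrt ρ * deriv (freg σ β ε) ρ|
          + |ρ ^ ((3 : ℝ) / 2) * iteratedDeriv 2 (freg σ β ε) ρ|
        ≤ C₂ * ε ^ (2 * σ - 1) := by
  refine ⟨30 * |β| + 1, by positivity, ?_⟩
  intro ε hε hε1 ρ hρ
  have he2 : (0:ℝ) < ε^2 := pow_pos hε 2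
  have hEpos : (0:ℝ) < ε ^ (2*σ-2) := Real.rpow_pos_of_pos hε _
  have hC1 : (0:ℝ) ≤ ε ^ (2*σ-1) := (Real.rpow_pos_of_pos hε _).le
  have hd2 : iteratedDeriv 2 (freg σ β ε) = deriv (deriv (freg σ β ε)) := by
    rw [iteratedDeriv_succ, iteratedDeriv_one]
  rw [hd2, deriv2_freg hε, deriv_freg hε]
  by_cases hc : ε^2 ≤ ρ
  · simp only [if_pos hc]
    have hρ0 : 0 < ρ := lt_of_lt_of_le he2 hc
    have key : ρ ^ (σ - 1/2) ≤ ε ^ (2*σ-1) := by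
      have := Real.rpow_le_rpow_of_nonpos he2 hc (by linarith : σ - 1/2 ≤ 0)
      rwa [sq_rpow hε (σ-1/2), show 2*(σ-1/2) = 2*σ-1 by ring] at this
    have hP0 : (0:ℝ) ≤ ρ ^ (σ - 1/2) := (Real.rpow_pos_of_pos hρ0 _).le
    have e1 : |Real.sqrt ρ * (β*σ*ρ^(σ-1))| = |β| * σ * ρ^(σ-1/2) := by
      rw [Real.sqrt_eq_rpow, abs_mul, abs_mul, abs_mul, abs_of_nonneg (Real.rpow_nonneg hρ _),
        abs_of_pos (Real.rpow_pos_of_pos hρ0 _), abs_of_pos hσ0]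
      rw [show ρ^((1:ℝ)/2) * (|β| * σ * ρ^(σ-1)) = |β| * σ * (ρ^((1:ℝ)/2) * ρ^(σ-1)) by ring,
        ← Real.rpow_add hρ0, show (1:ℝ)/2 + (σ-1) = σ - 1/2 by ring]
    have e2 : |ρ^((3:ℝ)/2) * (β*σ*(σ-1)*ρ^(σ-2))| = |β| * (σ*(1-σ)) * ρ^(σ-1/2) := by
      rw [abs_mul, abs_mul, abs_mul, abs_mul, abs_of_nonneg (Real.rpow_nonneg hρ _),
        abs_of_pos (Real.rpow_pos_of_pos hρ0 _), abs_of_pos hσ0,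
        abs_of_neg (by linarith : σ - 1 < 0)]
      rw [show ρ^((3:ℝ)/2) * (|β| * σ * -(σ-1) * ρ^(σ-2))
          = |β| * (σ*(1-σ)) * (ρ^((3:ℝ)/2) * ρ^(σ-2)) by ring,
        ← Real.rpow_add hρ0, show (3:ℝ)/2 + (σ-2) = σ - 1/2 by ring]
    rw [e1, e2]
    have h1 : |β| * ρ^(σ-1/2) ≤ |β| * ε^(2*σ-1) :=
      mul_le_mul_of_nonneg_left key (abs_nonneg β)
    calc |β| * σ*ρ^(σ-1/2) + |β| * (σ*(1-σ))*ρ^(σ-1/2)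
        = (|β| * ρ^(σ-1/2)) * (σ + σ*(1-σ)) := by ring
      _ ≤ (|β| * ρ^(σ-1/2)) * 1 := by
          apply mul_le_mul_of_nonneg_left (by nlinarith) (by positivity)
      _ = |β| * ρ^(σ-1/2) := mul_one _
      _ ≤ |β| * ε^(2*σ-1) := h1
      _ ≤ (30*|β|+1) * ε^(2*σ-1) := by nlinarith [abs_nonneg β]
  · have hlt : ρ < ε^2 := not_le.1 hc
    simp only []
    rw [if_neg hc, if_neg hc]
    have hu0 : 0 ≤ 1 - ρ/ε^2 := by
      rw [sub_nonneg]; exact (div_le_one he2).2 hlt.le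
    have hu1 : 1 - ρ/ε^2 ≤ 1 := by
      have : 0 ≤ ρ/ε^2 := div_nonneg hρ he2.le
      linarith
    have hb1 : |G1 σ β ε ρ| ≤ |β| * ε ^ (2*σ-2) * 10 := by
      have hs := S1_bound σ (1-ρ/ε^2) hσ0 hσ hu0 hu1
      rw [show (1 - (1-ρ/ε^2)) = ρ/ε^2 by ring] at hs
      simp only [G1]
      rw [abs_mul, abs_mul, abs_of_pos hEpos]
      exact mul_le_mul_of_nonneg_left hs (by positivity)
    have hb2 : |G2 σ β ε ρ| ≤ |β| * ε ^ (2*σ-2) / ε^2 * 20 := by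
      have hs := S2_bound σ (1-ρ/ε^2) hσ0 hσ hu0 hu1
      rw [show (1 - (1-ρ/ε^2)) = ρ/ε^2 by ring] at hs
      simp only [G2]
      rw [abs_mul, abs_div, abs_mul, abs_of_pos hEpos, abs_of_pos he2]
      exact mul_le_mul_of_nonneg_left hs (by positivity)
    have hsq : Real.sqrt ρ ≤ ε := by
      rw [show ε = Real.sqrt (ε^2) from (Real.sqrt_sq hε.le).symm]
      exact Real.sqrt_le_sqrt hlt.le
    have hr32 : ρ^((3:ℝ)/2) ≤ ε^(3:ℝ) := by
      have := Real.rpow_le_rpow hρ hlt.le (by norm_num : (0:ℝ) ≤ (3:ℝ)/2)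
      rwa [sq_rpow hε ((3:ℝ)/2), show 2*((3:ℝ)/2) = (3:ℝ) by norm_num] at this
    have t1 : |Real.sqrt ρ * G1 σ β ε ρ| ≤ ε * (|β| * ε ^ (2*σ-2) * 10) := by
      rw [abs_mul, abs_of_nonneg (Real.sqrt_nonneg _)]
      exact mul_le_mul hsq hb1 (abs_nonneg _) hε.le
    have t2 : |ρ^((3:ℝ)/2) * G2 σ β ε ρ| ≤ ε^(3:ℝ) * (|β| * ε ^ (2*σ-2) / ε^2 * 20) := by
      rw [abs_mul, abs_of_nonneg (Real.rpow_nonneg hρ _)]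
      exact mul_le_mul hr32 hb2 (abs_nonneg _) (Real.rpow_nonneg hε.le _)
    have k1 : ε * ε ^ (2*σ-2) = ε ^ (2*σ-1) := by
      rw [show (2*σ-1) = (2*σ-2)+1 by ring, Real.rpow_add hε, Real.rpow_one]
      ring
    have k2 : ε^(3:ℝ) * (|β| * ε ^ (2*σ-2) / ε^2 * 20) = 20 * |β| * ε ^ (2*σ-1) := by
      have h3 : ε^(3:ℝ) = ε^2 * ε := by
        rw [show (3:ℝ) = (2:ℝ)+1 by norm_num, Real.rpow_add hε, Real.rpow_one,
          show (2:ℝ) = ((2:ℕ):ℝ) by norm_num, Real.rpow_natCast]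
      rw [h3]
      field_simp
      rw [show 2*(σ-1) = 2*σ-2 by ring]
      linear_combination |β| * k1
    calc |Real.sqrt ρ * G1 σ β ε ρ| + |ρ^((3:ℝ)/2) * G2 σ β ε ρ|
        ≤ ε * (|β| * ε ^ (2*σ-2) * 10) + ε^(3:ℝ) * (|β| * ε ^ (2*σ-2) / ε^2 * 20) := by
          exact add_le_add t1 t2
      _ = 30 * |β| * ε ^ (2*σ-1) := by
          rw [k2]
          linear_combination (10 * |β|) * k1
      _ ≤ (30*|β|+1) * ε ^ (2*σ-1) := by nlinarith [abs_nonneg β]
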